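/- Let b ≥ 3 and r ≥ 1 be natural numbers, let m₀ and n be natural numbers, and let k : ℕ → ℕ be a sequence that is nondecreasing on the indices 0, 1, …, r−1. Assume k 0 ≥ 2, m₀ ≥ 3, n = m₀ + Σ_{j=0}^{r−1} k j, and (as rational numbers) r ≥ n/b + b/2 − 2. Then for every index j with j < r and j ≤ ⌊b/2⌋ − 1, one has 2 ≤ k j ≤ b − 1. -/

import Mathlib

/-- Arithmetic content of the bound on codimensions in a chain of fixed-point set components:
if `k 0 ≥ 2`, `m₀ ≥ 3`, `n = m₀ + ∑_{j<r} k j`, the `k j` are nondecreasing for `j < r`, and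
`r ≥ n/b + b/2 − 2` (as rationals), then `2 ≤ k j ≤ b − 1` for all `j < r` with
`j ≤ ⌊b/2⌋ − 1`. -/
theorem codim_bounds_of_chain (b r m₀ n : ℕ) (k : ℕ → ℕ)
    (hb : 3 ≤ b) (hr : 1 ≤ r)
    (hmono : ∀ i j : ℕ, i ≤ j → j < r → k i ≤ k j)
    (hk0 : 2 ≤ k 0) (hm₀ : 3 ≤ m₀)
    (hn : n = m₀ + ∑ j ∈ Finset.range r, k j)
    (hrge : (r : ℚ) ≥ (n : ℚ) / (b : ℚ) + (b : ℚ) / 2 - 2) :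
    ∀ j : ℕ, j < r → j ≤ b / 2 - 1 → 2 ≤ k j ∧ k j ≤ b - 1 := by
  intro j hjr hjhalf
  refine ⟨hk0.trans (hmono 0 j (Nat.zero_le _) hjr), ?_⟩
  by_contra h
  have hbk : b ≤ k j := by omega
  -- split the sum
  have hsplit : ∑ i ∈ Finset.range r, k i
      = ∑ i ∈ Finset.range j, k i + ∑ i ∈ Finset.Ico j r, k i := by
    rw [Finset.range_eq_Ico, Finset.range_eq_Ico]
    exact (Finset.sum_Ico_consecutive k (Nat.zero_le j) hjr.le).symm
  have h1 : 2 * j ≤ ∑ i ∈ Finset.range j, k i := by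
    calc 2 * j = ∑ _i ∈ Finset.range j, 2 := by simp [mul_comm]
    _ ≤ _ := Finset.sum_le_sum fun i hi =>
        hk0.trans (hmono 0 i (Nat.zero_le _) ((Finset.mem_range.mp hi).trans hjr))
  have h2 : b * (r - j) ≤ ∑ i ∈ Finset.Ico j r, k i := by
    calc b * (r - j) = ∑ _i ∈ Finset.Ico j r, b := by
          simp [Nat.card_Ico, mul_comm]
    _ ≤ _ := Finset.sum_le_sum fun i hi => by
        obtain ⟨ha, hb'⟩ := Finset.mem_Ico.mp hi
        exact hbk.trans (hmono j i ha hb')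
  have hsum : 2 * j + b * (r - j) ≤ ∑ i ∈ Finset.range r, k i := by
    rw [hsplit]; exact Nat.add_le_add h1 h2
  have hnlb : m₀ + (2 * j + b * (r - j)) ≤ n := by omega
  have hjb : 2 * j + 2 ≤ b := by omega
  -- move to ℚ
  have hBpos : (0 : ℚ) < (b : ℚ) := by exact_mod_cast (by omega : 0 < b)
  have hB3 : (3 : ℚ) ≤ (b : ℚ) := by exact_mod_cast hb
  have hJnn : (0 : ℚ) ≤ (j : ℚ) := Nat.cast_nonneg j
  have hjbQ : 2 * (j : ℚ) + 2 ≤ (b : ℚ) := by exact_mod_cast hjb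
  have hnlbQ : (m₀ : ℚ) + (2 * (j : ℚ) + (b : ℚ) * ((r : ℚ) - (j : ℚ))) ≤ (n : ℚ) := by
    have := hnlb
    have hcast : ((r - j : ℕ) : ℚ) = (r : ℚ) - (j : ℚ) := by
      rw [Nat.cast_sub hjr.le]
    calc (m₀ : ℚ) + (2 * (j : ℚ) + (b : ℚ) * ((r : ℚ) - (j : ℚ)))
        = ((m₀ + (2 * j + b * (r - j)) : ℕ) : ℚ) := by push_cast [hcast]; ring
      _ ≤ (n : ℚ) := by exact_mod_cast this
  have hmQ : (3 : ℚ) ≤ (m₀ : ℚ) := by exact_mod_cast hm₀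
  have hrge' : (n : ℚ) + (b : ℚ) * (b : ℚ) / 2 - 2 * (b : ℚ) ≤ (r : ℚ) * (b : ℚ) := by
    have h := mul_le_mul_of_nonneg_right hrge hBpos.le
    rw [sub_mul, add_mul, div_mul_cancel₀ _ hBpos.ne'] at h
    nlinarith [h]
  nlinarith [mul_le_mul_of_nonneg_right hjbQ (by linarith : (0:ℚ) ≤ (b:ℚ) - 2),
    mul_nonneg hJnn (by linarith : (0:ℚ) ≤ (b:ℚ) - 2)]
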